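/- Let X be a finite set with Nat.card X = p, and let ν be the Fibonacci norm on the Cartesian (1,1)-magma generated by X. Then for every n ≥ 1, the number of elements of norm n, namely Nat.card {w : List (Fin 2) × X // ν w = n}, equals the p-Fibonacci number F p n. -/
import Mathlib

def pFib (p : ℕ) : ℕ → ℕ
  | 0 => 0
  | 1 => p
  | n + 2 => pFib p (n + 1) + pFib p n

private def W (l : List (Fin 2)) : ℕ := (l.map (fun u => (u : ℕ) + 1)).sum

private lemma W_nil : W ([] : List (Fin 2)) = 0 := rfl

private lemma W_cons (a : Fin 2) (t : List (Fin 2)) : W (a :: t) = (a : ℕ) + 1 + W t := rfl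

private lemma length_le_W (l : List (Fin 2)) : l.length ≤ W l := by
  induction l with
  | nil => simp [W_nil]
  | cons a t ih => rw [W_cons]; simp only [List.length_cons]; omega

private instance finW (m : ℕ) : Finite {l : List (Fin 2) // W l = m} := by
  have : ∀ l ∈ {l : List (Fin 2) | W l = m}, l.length ≤ m := by
    intro l hl
    have := length_le_W l
    simp only [Set.mem_setOf_eq] at hl
    omega
  exact (List.finite_length_le (Fin 2) m |>.subset this).to_subtype

private lemma cardW : ∀ m : ℕ, Nat.card {l : List (Fin 2) // W l = m} = Nat.fib (m + 1)
  | 0 => by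
    have e : {l : List (Fin 2) // W l = 0} ≃ Unit := by
      refine ⟨fun _ => Unit.unit, fun _ => ⟨[], rfl⟩, ?_, fun _ => rfl⟩
      rintro ⟨l, hl⟩
      cases l with
      | nil => rfl
      | cons a t => rw [W_cons] at hl; omega
    rw [Nat.card_congr e]; simp
  | 1 => by
    have e : {l : List (Fin 2) // W l = 1} ≃ Unit := by
      refine ⟨fun _ => Unit.unit, fun _ => ⟨[0], rfl⟩, ?_, fun _ => rfl⟩
      rintro ⟨l, hl⟩
      cases l with
      | nil => rw [W_nil] at hl; omega
      | cons a t =>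
        cases t with
        | nil =>
          rw [W_cons, W_nil] at hl
          have : (a : ℕ) = 0 := by omega
          simp [Subtype.ext_iff, Fin.ext_iff, this]
        | cons b s =>
          rw [W_cons, W_cons] at hl
          omega
    rw [Nat.card_congr e]; simp
  | m + 2 => by
    have hbij : Function.Bijective
        (fun x : {l : List (Fin 2) // W l = m + 1} ⊕ {l : List (Fin 2) // W l = m} =>
          (Sum.elim (fun l => (⟨(0 : Fin 2) :: l.1, by rw [W_cons, l.2]; simp; omega⟩ :
              {l : List (Fin 2) // W l = m + 2}))
            (fun l => ⟨(1 : Fin 2) :: l.1, by rw [W_cons, l.2]; simp; omega⟩) x)) := by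
      constructor
      · rintro (⟨l, hl⟩ | ⟨l, hl⟩) (⟨l', hl'⟩ | ⟨l', hl'⟩) h <;>
          simp_all [Subtype.ext_iff]
      · rintro ⟨l, hl⟩
        cases l with
        | nil => rw [W_nil] at hl; omega
        | cons a t =>
          rw [W_cons] at hl
          have ha : a = 0 ∨ a = 1 := by omega
          rcases ha with rfl | rfl
          · refine ⟨Sum.inl ⟨t, ?_⟩, rfl⟩
            simp only [Fin.val_zero] at hl; omega
          · refine ⟨Sum.inr ⟨t, ?_⟩, rfl⟩
            simp only [Fin.val_one] at hl; omega
    have h := Nat.card_eq_of_bijective _ hbij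
    rw [Nat.card_sum, cardW (m + 1), cardW m] at h
    have h2 : Nat.fib (m + 2 + 1) = Nat.fib (m + 1 + 1) + Nat.fib (m + 1) := by
      rw [show m + 2 + 1 = (m + 1) + 2 from rfl, Nat.fib_add_two]; omega
    rw [h2]; exact h.symm

private lemma pFib_eq (p : ℕ) : ∀ n, pFib p n = p * Nat.fib n
  | 0 => by simp [pFib]
  | 1 => by simp [pFib]
  | n + 2 => by
    rw [pFib, pFib_eq p (n + 1), pFib_eq p n, Nat.fib_add_two]; ring

theorem stmt13 {X : Type*} [Finite X] (p : ℕ) (hX : Nat.card X = p)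
    (n : ℕ) (hn : 1 ≤ n) :
    Nat.card {w : List (Fin 2) × X //
        1 + (w.1.map (fun u => (u : ℕ) + 1)).sum = n} = pFib p n := by
  obtain ⟨m, rfl⟩ : ∃ m, n = m + 1 := ⟨n - 1, by omega⟩
  have e : {w : List (Fin 2) × X // 1 + (w.1.map (fun u => (u : ℕ) + 1)).sum = m + 1} ≃
      {l : List (Fin 2) // W l = m} × X := by
    refine ⟨fun w => (⟨w.1.1, by have h : 1 + W w.1.1 = m + 1 := w.2; omega⟩, w.1.2),
      fun lx => ⟨(lx.1.1, lx.2), show 1 + W lx.1.1 = m + 1 by rw [lx.1.2]; omega⟩, ?_, ?_⟩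
    · rintro ⟨⟨l, x⟩, h⟩; rfl
    · rintro ⟨⟨l, h⟩, x⟩; rfl
  rw [Nat.card_congr e, Nat.card_prod, cardW, hX, pFib_eq, Nat.mul_comm]
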